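/- Let X be a T_D topological space and let F and F′ be two presheaves of commutative rings on X. Then the pre-meadows with 𝐚 T(F) = ⊔_{U ∈ Open(X)} F(U) and T(F′) = ⊔_{U ∈ Open(X)} F′(U) (with operations s + t := ρ_{U∩V,U}(s) + ρ_{U∩V,V}(t) and s·t := ρ_{U∩V,U}(s)·ρ_{U∩V,V}(t)) are isomorphic if and only if there exists a homeomorphism f : X → X such that F is isomorphic to the direct image presheaf f_*(F′). -/

import Mathlib

/-- A pre-meadow structure on a type `P` with given operations. -/
structure IsPreMeadow {P : Type*} (add mul : P → P → P) (neg : P → P) (zero one : P) : Prop where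
  zero_ne_one : zero ≠ one
  add_assoc : ∀ x y z : P, add (add x y) z = add x (add y z)
  add_comm : ∀ x y : P, add x y = add y x
  add_zero : ∀ x : P, add x zero = x
  add_neg : ∀ x : P, add x (neg x) = mul zero x
  mul_assoc : ∀ x y z : P, mul (mul x y) z = mul x (mul y z)
  mul_comm : ∀ x y : P, mul x y = mul y x
  one_mul : ∀ x : P, mul one x = x
  mul_add : ∀ x y z : P, mul x (add y z) = add (mul x y) (mul x z)
  neg_neg : ∀ x : P, neg (neg x) = x
  zero_mul_add : ∀ x y : P, mul zero (add x y) = mul (mul zero x) y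

/-- A pre-meadow with `𝐚`: there is a (unique) element `a ∈ 0·P` such that
`P_a = {x | 0·x = a}` has exactly one element and `x + a = a` for all `x`. -/
structure IsPreMeadowWithA {P : Type*} (add mul : P → P → P) (neg : P → P) (zero one a : P)
    extends IsPreMeadow add mul neg zero one : Prop where
  a_spec : ∃! x : P, mul zero x = a
  add_a : ∀ x : P, add x a = a
  a_uniq : ∀ b : P, (∃! x : P, mul zero x = b) → (∀ x : P, add x b = b) → b = a

/-- A common meadow: a pre-meadow with `𝐚` equipped with an inverse operation. -/
structure IsCommonMeadow {P : Type*} (add mul : P → P → P) (neg inv : P → P) (zero one a : P)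
    extends IsPreMeadowWithA add mul neg zero one a : Prop where
  mul_inv : ∀ x : P, mul x (inv x) = add one (mul zero (inv x))
  inv_mul : ∀ x y : P, inv (mul x y) = mul (inv x) (inv y)
  inv_one_add : ∀ x : P, inv (add one (mul zero x)) = add one (mul zero x)
  inv_zero : inv zero = a

open TopologicalSpace in
/-- Addition on the disjoint union `M_F = ⊔_{U ∈ Open(X)} F(U)`:
`s + t = ρ_{U∩V,U}(s) + ρ_{U∩V,V}(t)`. -/
def psAdd {X : Type*} [TopologicalSpace X] {F : Opens X → Type*} [∀ U, CommRing (F U)]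
    (res : ∀ {U V : Opens X}, V ≤ U → (F U →+* F V)) (s t : Σ U : Opens X, F U) :
    Σ U : Opens X, F U :=
  ⟨s.1 ⊓ t.1, res (inf_le_left : s.1 ⊓ t.1 ≤ s.1) s.2 + res (inf_le_right : s.1 ⊓ t.1 ≤ t.1) t.2⟩

open TopologicalSpace in
/-- Multiplication on the disjoint union `M_F = ⊔_{U ∈ Open(X)} F(U)`:
`s · t = ρ_{U∩V,U}(s) · ρ_{U∩V,V}(t)`. -/
def psMul {X : Type*} [TopologicalSpace X] {F : Opens X → Type*} [∀ U, CommRing (F U)]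
    (res : ∀ {U V : Opens X}, V ≤ U → (F U →+* F V)) (s t : Σ U : Opens X, F U) :
    Σ U : Opens X, F U :=
  ⟨s.1 ⊓ t.1, res (inf_le_left : s.1 ⊓ t.1 ≤ s.1) s.2 * res (inf_le_right : s.1 ⊓ t.1 ≤ t.1) t.2⟩

open TopologicalSpace in
/-- Negation on `M_F`, computed sectionwise. -/
def psNeg {X : Type*} [TopologicalSpace X] (F : Opens X → Type*) [∀ U, CommRing (F U)]
    (s : Σ U : Opens X, F U) : Σ U : Opens X, F U :=
  ⟨s.1, -s.2⟩

open TopologicalSpace in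
/-- The zero of `M_F`: the zero section over the whole space. -/
def psZero {X : Type*} [TopologicalSpace X] (F : Opens X → Type*) [∀ U, CommRing (F U)] :
    Σ U : Opens X, F U :=
  ⟨⊤, 0⟩

open TopologicalSpace in
/-- The one of `M_F`: the unit section over the whole space. -/
def psOne {X : Type*} [TopologicalSpace X] (F : Opens X → Type*) [∀ U, CommRing (F U)] :
    Σ U : Opens X, F U :=
  ⟨⊤, 1⟩

open TopologicalSpace in
/-- The element `𝐚` of `M_F`: the unique element of `F(∅)`. -/
def psA {X : Type*} [TopologicalSpace X] (F : Opens X → Type*) [∀ U, CommRing (F U)] :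
    Σ U : Opens X, F U :=
  ⟨⊥, 0⟩

open TopologicalSpace in
/-- The preimage of an open set under a homeomorphism. -/
def preim {X : Type*} [TopologicalSpace X] (f : X ≃ₜ X) (U : Opens X) : Opens X :=
  ⟨f ⁻¹' (U : Set X), U.isOpen.preimage f.continuous⟩

open TopologicalSpace in
theorem preim_mono {X : Type*} [TopologicalSpace X] (f : X ≃ₜ X) {U V : Opens X} (h : V ≤ U) :
    preim f V ≤ preim f U :=
  fun _ ha => h ha


section S13Aux

open TopologicalSpace

variable {X : Type u} [TopologicalSpace X]

namespace S13

lemma snd_inj {G : Opens X → Type v} {U : Opens X} {x y : G U}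
    (h : (⟨U, x⟩ : Σ U : Opens X, G U) = ⟨U, y⟩) : x = y := by
  injection h

lemma sigma_cast {G : Opens X → Type v} (s : Σ U : Opens X, G U) {V : Opens X} (h : s.1 = V) :
    s = ⟨V, cast (congrArg G h) s.2⟩ := by
  cases s
  subst h
  rfl

section PS

variable {F : Opens X → Type v} [∀ U, CommRing (F U)]
variable (res : ∀ {U V : Opens X}, V ≤ U → (F U →+* F V))
variable (res_id : ∀ (U : Opens X) (x : F U), res le_rfl x = x)

lemma sigma_res_congr {U V W : Opens X} (hVW : V = W) (h1 : V ≤ U) (h2 : W ≤ U) (x : F U) :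
    (⟨V, res h1 x⟩ : Σ U : Opens X, F U) = ⟨W, res h2 x⟩ := by subst hVW; rfl

include res_id in
lemma sigma_res_self {U W : Opens X} (hW : W = U) (h : W ≤ U) (x : F U) :
    (⟨W, res h x⟩ : Σ U : Opens X, F U) = ⟨U, x⟩ := by
  subst hW
  exact congrArg (Sigma.mk W) (res_id W x)

lemma sigma_zero_congr {A B : Opens X} (h : A = B) :
    (⟨A, (0 : F A)⟩ : Σ U : Opens X, F U) = ⟨B, 0⟩ := by subst h; rfl

lemma sigma_one_congr {A B : Opens X} (h : A = B) :
    (⟨A, (1 : F A)⟩ : Σ U : Opens X, F U) = ⟨B, 1⟩ := by subst h; rfl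

lemma cast_add {A B : Opens X} (h : A = B) (x y : F A) :
    cast (congrArg F h) (x + y) = cast (congrArg F h) x + cast (congrArg F h) y := by
  subst h; rfl

lemma cast_mul {A B : Opens X} (h : A = B) (x y : F A) :
    cast (congrArg F h) (x * y) = cast (congrArg F h) x * cast (congrArg F h) y := by
  subst h; rfl

lemma cast_one {A B : Opens X} (h : A = B) :
    cast (congrArg F h) (1 : F A) = 1 := by subst h; rfl

lemma cast_res {A B A' B' : Opens X} (hA : A = A') (hB : B = B')
    (h : B ≤ A) (h' : B' ≤ A') (y : F A) :
    cast (congrArg F hB) (res h y) = res h' (cast (congrArg F hA) y) := by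
  subst hA; subst hB; rfl

include res_id in
lemma psAdd_diag (U : Opens X) (x y : F U) :
    psAdd res ⟨U, x⟩ ⟨U, y⟩ = ⟨U, x + y⟩ := by
  change (⟨U ⊓ U, res (inf_le_left : U ⊓ U ≤ U) x + res (inf_le_right : U ⊓ U ≤ U) y⟩ :
    Σ U : Opens X, F U) = ⟨U, x + y⟩
  have h1 : res (inf_le_left : U ⊓ U ≤ U) x + res (inf_le_right : U ⊓ U ≤ U) y
      = res (inf_le_left : U ⊓ U ≤ U) (x + y) := (map_add (res inf_le_left) x y).symm
  rw [h1]
  exact sigma_res_self res res_id (inf_idem U) _ _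

include res_id in
lemma psMul_diag (U : Opens X) (x y : F U) :
    psMul res ⟨U, x⟩ ⟨U, y⟩ = ⟨U, x * y⟩ := by
  change (⟨U ⊓ U, res (inf_le_left : U ⊓ U ≤ U) x * res (inf_le_right : U ⊓ U ≤ U) y⟩ :
    Σ U : Opens X, F U) = ⟨U, x * y⟩
  have h1 : res (inf_le_left : U ⊓ U ≤ U) x * res (inf_le_right : U ⊓ U ≤ U) y
      = res (inf_le_left : U ⊓ U ≤ U) (x * y) := (map_mul (res inf_le_left) x y).symm
  rw [h1]
  exact sigma_res_self res res_id (inf_idem U) _ _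

include res_id in
lemma psAdd_zero_right (s : Σ U : Opens X, F U) : psAdd res s (psZero F) = s := by
  obtain ⟨U, x⟩ := s
  change (⟨U ⊓ ⊤, res (inf_le_left : U ⊓ ⊤ ≤ U) x + res (inf_le_right : U ⊓ ⊤ ≤ ⊤) (0 : F ⊤)⟩ :
    Σ U : Opens X, F U) = ⟨U, x⟩
  rw [map_zero, add_zero]
  exact sigma_res_self res res_id (inf_top_eq U) _ _

include res_id in
lemma psAdd_zero_left (s : Σ U : Opens X, F U) : psAdd res (psZero F) s = s := by
  obtain ⟨U, x⟩ := s
  change (⟨⊤ ⊓ U, res (inf_le_left : ⊤ ⊓ U ≤ ⊤) (0 : F ⊤) + res (inf_le_right : ⊤ ⊓ U ≤ U) x⟩ :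
    Σ U : Opens X, F U) = ⟨U, x⟩
  rw [map_zero, zero_add]
  exact sigma_res_self res res_id (top_inf_eq U) _ _

lemma psMul_zero_left (s : Σ U : Opens X, F U) : psMul res (psZero F) s = ⟨s.1, 0⟩ := by
  obtain ⟨U, x⟩ := s
  change (⟨⊤ ⊓ U, res (inf_le_left : ⊤ ⊓ U ≤ ⊤) (0 : F ⊤) * res (inf_le_right : ⊤ ⊓ U ≤ U) x⟩ :
    Σ U : Opens X, F U) = ⟨U, 0⟩
  rw [map_zero, zero_mul]
  exact sigma_zero_congr (top_inf_eq U)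

lemma psMul_zero_zero (U V : Opens X) :
    psMul res ⟨U, (0 : F U)⟩ ⟨V, (0 : F V)⟩ = ⟨U ⊓ V, 0⟩ := by
  change (⟨U ⊓ V, res (inf_le_left : U ⊓ V ≤ U) (0 : F U)
    * res (inf_le_right : U ⊓ V ≤ V) (0 : F V)⟩ : Σ U : Opens X, F U) = ⟨U ⊓ V, 0⟩
  rw [map_zero, zero_mul]

lemma psMul_one_right {U V : Opens X} (h : V ≤ U) (x : F U) :
    psMul res ⟨U, x⟩ ⟨V, (1 : F V)⟩ = ⟨V, res h x⟩ := by
  change (⟨U ⊓ V, res (inf_le_left : U ⊓ V ≤ U) x * res (inf_le_right : U ⊓ V ≤ V) (1 : F V)⟩ :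
    Σ U : Opens X, F U) = ⟨V, res h x⟩
  rw [map_one, mul_one]
  exact sigma_res_congr res (inf_eq_right.mpr h) _ h x

lemma sigma_cast_symm {B V : Opens X} (h : B = V) (y : F V) :
    (⟨B, cast (congrArg F h.symm) y⟩ : Σ U : Opens X, F U) = ⟨V, y⟩ := by subst h; rfl

lemma sigma_add_congr {A B U' V' : Opens X} (h : A = B) (hAU : A ≤ U') (hBU : B ≤ U')
    (hAV : A ≤ V') (hBV : B ≤ V') (u : F U') (v : F V') :
    (⟨A, res hAU u + res hAV v⟩ : Σ U : Opens X, F U) = ⟨B, res hBU u + res hBV v⟩ := by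
  subst h; rfl

lemma sigma_mul_congr {A B U' V' : Opens X} (h : A = B) (hAU : A ≤ U') (hBU : B ≤ U')
    (hAV : A ≤ V') (hBV : B ≤ V') (u : F U') (v : F V') :
    (⟨A, res hAU u * res hAV v⟩ : Σ U : Opens X, F U) = ⟨B, res hBU u * res hBV v⟩ := by
  subst h; rfl

end PS

section Two

variable {F : Opens X → Type v} [∀ U, CommRing (F U)]
variable {F' : Opens X → Type v} [∀ U, CommRing (F' U)]
variable (res : ∀ {U V : Opens X}, V ≤ U → (F U →+* F V))
variable (res' : ∀ {U V : Opens X}, V ≤ U → (F' U →+* F' V))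

lemma phi_zero_section (φ : (Σ U : Opens X, F U) ≃ (Σ U : Opens X, F' U))
    (hmul : ∀ s t, φ (psMul res s t) = psMul res' (φ s) (φ t))
    (hzero : φ (psZero F) = psZero F') (U : Opens X) :
    φ ⟨U, (0 : F U)⟩ = ⟨(φ ⟨U, (0 : F U)⟩).1, 0⟩ := by
  have h := hmul (psZero F) ⟨U, (0 : F U)⟩
  rw [psMul_zero_left res, hzero, psMul_zero_left res'] at h
  exact h

lemma phi_fst (φ : (Σ U : Opens X, F U) ≃ (Σ U : Opens X, F' U))
    (hmul : ∀ s t, φ (psMul res s t) = psMul res' (φ s) (φ t))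
    (hzero : φ (psZero F) = psZero F') (U : Opens X) (x : F U) :
    (φ ⟨U, x⟩).1 = (φ ⟨U, (0 : F U)⟩).1 := by
  have h := hmul (psZero F) ⟨U, x⟩
  rw [psMul_zero_left res, hzero, psMul_zero_left res'] at h
  dsimp only at h
  rw [h]

end Two

section TD

variable (hTD : ∀ x : X, ∃ U C : Set X, IsOpen U ∧ IsClosed C ∧ {x} = U ∩ C)

include hTD

lemma td_eq {y y' : X} (h : ∀ O : Opens X, y ∈ O ↔ y' ∈ O) : y = y' := by
  obtain ⟨U, C, hU, hC, hUC⟩ := hTD y'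
  have hy'U : y' ∈ U := by
    have h0 : y' ∈ ({y'} : Set X) := rfl
    rw [hUC] at h0; exact h0.1
  have hyU : y ∈ U := (h ⟨U, hU⟩).2 hy'U
  have hyV : y ∉ U ∩ Cᶜ := by
    intro hy
    have h1 : y' ∈ U ∩ Cᶜ := (h ⟨U ∩ Cᶜ, hU.inter hC.isOpen_compl⟩).1 hy
    have h2 : y' ∈ U ∩ C := by rw [← hUC]; rfl
    exact h1.2 h2.2
  have hyC : y ∈ C := by
    by_contra hc
    exact hyV ⟨hyU, hc⟩
  have : y ∈ ({y'} : Set X) := by rw [hUC]; exact ⟨hyU, hyC⟩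
  exact this

lemma point_exists (g : Opens X ≃o Opens X) (x : X) :
    ∃ y : X, ∀ W : Opens X, y ∈ g W ↔ x ∈ W := by
  obtain ⟨U, C, hU, hC, hUC⟩ := hTD x
  have hxU : x ∈ U := by
    have h0 : x ∈ ({x} : Set X) := rfl
    rw [hUC] at h0; exact h0.1
  have hxC : x ∈ C := by
    have h0 : x ∈ ({x} : Set X) := rfl
    rw [hUC] at h0; exact h0.2
  set Uo : Opens X := ⟨U, hU⟩ with hUo
  set Vo : Opens X := ⟨U ∩ Cᶜ, hU.inter hC.isOpen_compl⟩ with hVo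
  have hVU : Vo ≤ Uo := fun z hz => hz.1
  have hxVo : x ∉ Vo := fun hx => hx.2 hxC
  have hlt : Vo < Uo := lt_of_le_of_ne hVU (by
    intro hEq
    rw [hEq] at hxVo
    exact hxVo hxU)
  have hglt : g Vo < g Uo := g.strictMono hlt
  obtain ⟨y, hyU, hyV⟩ := SetLike.exists_of_lt hglt
  refine ⟨y, fun W => ⟨?_, ?_⟩⟩
  · intro hyW
    by_contra hxW
    have hsub : Uo ⊓ W ≤ Vo := by
      intro z hz
      refine ⟨hz.1, fun hzC => hxW ?_⟩
      have hz1 : z ∈ ({x} : Set X) := by rw [hUC]; exact ⟨hz.1, hzC⟩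
      have hz2 : z = x := hz1
      rw [← hz2]
      exact hz.2
    have hym : y ∈ g (Uo ⊓ W) := by
      rw [g.map_inf]
      exact ⟨hyU, hyW⟩
    exact hyV (g.monotone hsub hym)
  · intro hxW
    have hsub : Uo ≤ Vo ⊔ (Uo ⊓ W) := by
      intro z hz
      rw [← SetLike.mem_coe, Opens.coe_sup]
      by_cases hz' : z = x
      · exact Or.inr ⟨hz, by rw [hz']; exact hxW⟩
      · refine Or.inl ⟨hz, fun hzC => hz' ?_⟩
        have : z ∈ ({x} : Set X) := by rw [hUC]; exact ⟨hz, hzC⟩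
        exact this
    have hym : y ∈ g Vo ⊔ g (Uo ⊓ W) := by
      rw [← g.map_sup]
      exact g.monotone hsub hyU
    rw [← SetLike.mem_coe, Opens.coe_sup] at hym
    rcases hym with hym | hym
    · exact absurd hym hyV
    · exact g.monotone inf_le_right hym

lemma point_unique (g : Opens X ≃o Opens X) {x y y' : X}
    (hy : ∀ W : Opens X, y ∈ g W ↔ x ∈ W) (hy' : ∀ W : Opens X, y' ∈ g W ↔ x ∈ W) :
    y = y' := by
  apply td_eq hTD
  intro O
  have hO : O = g (g.symm O) := (g.apply_symm_apply O).symm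
  rw [hO, hy, hy']

noncomputable def ptMap (g : Opens X ≃o Opens X) (x : X) : X :=
  Classical.choose (point_exists hTD g x)

lemma ptMap_spec (g : Opens X ≃o Opens X) (x : X) :
    ∀ W : Opens X, ptMap hTD g x ∈ g W ↔ x ∈ W :=
  Classical.choose_spec (point_exists hTD g x)

lemma ptMap_symm_spec (g : Opens X ≃o Opens X) (y : X) :
    ∀ W : Opens X, ptMap hTD g.symm y ∈ W ↔ y ∈ g W := by
  intro W
  have h := ptMap_spec hTD g.symm y (g W)
  rwa [g.symm_apply_apply] at h

lemma homeo_of_orderIso (g : Opens X ≃o Opens X) :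
    ∃ f : X ≃ₜ X, ∀ U : Opens X, preim f U = g U := by
  have left_inv : ∀ y : X, ptMap hTD g (ptMap hTD g.symm y) = y := by
    intro y
    apply td_eq hTD
    intro O
    have hO : O = g (g.symm O) := (g.apply_symm_apply O).symm
    rw [hO]
    rw [ptMap_spec hTD g (ptMap hTD g.symm y) (g.symm O)]
    rw [ptMap_symm_spec hTD g y (g.symm O), ← hO]
  have right_inv : ∀ x : X, ptMap hTD g.symm (ptMap hTD g x) = x := by
    intro x
    apply td_eq hTD
    intro O
    rw [ptMap_symm_spec hTD g (ptMap hTD g x) O, ptMap_spec hTD g x O]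
  have cont1 : Continuous (ptMap hTD g.symm) := by
    rw [continuous_def]
    intro S hS
    have : ptMap hTD g.symm ⁻¹' S = ((g ⟨S, hS⟩ : Opens X) : Set X) := by
      ext y
      simp only [Set.mem_preimage, SetLike.mem_coe]
      exact ptMap_symm_spec hTD g y ⟨S, hS⟩

    rw [this]
    exact (g ⟨S, hS⟩).2
  have cont2 : Continuous (ptMap hTD g) := by
    rw [continuous_def]
    intro S hS
    have : ptMap hTD g ⁻¹' S = ((g.symm ⟨S, hS⟩ : Opens X) : Set X) := by
      ext x
      have h := ptMap_spec hTD g x (g.symm ⟨S, hS⟩)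
      rw [g.apply_symm_apply] at h
      simp only [Set.mem_preimage, SetLike.mem_coe]
      exact h
    rw [this]
    exact (g.symm ⟨S, hS⟩).2
  refine ⟨⟨⟨ptMap hTD g.symm, ptMap hTD g, left_inv, right_inv⟩, cont1, cont2⟩, ?_⟩
  intro U
  apply Opens.ext
  ext y
  simp only [preim, Set.mem_preimage, SetLike.mem_coe]
  exact ptMap_symm_spec hTD g y U

end TD

end S13

end S13Aux

open TopologicalSpace in
/-- Let `X` be a `T_D` topological space and `F`, `F'` two presheaves of
commutative rings on `X`.  Then the pre-meadows with `𝐚`, `T(F) = ⊔_{U ∈ Open(X)} F(U)` and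
`T(F') = ⊔_{U ∈ Open(X)} F'(U)`, are isomorphic if and only if there is a homeomorphism
`f : X → X` such that `F` is isomorphic to the direct image presheaf `f_* F'`
(i.e. `U ↦ F'(f⁻¹(U))`). -/
theorem statement13 {X : Type u} [TopologicalSpace X]
    (hTD : ∀ x : X, ∃ U C : Set X, IsOpen U ∧ IsClosed C ∧ {x} = U ∩ C)
    (F : Opens X → Type v) [∀ U, CommRing (F U)] [Subsingleton (F ⊥)]
    (res : ∀ {U V : Opens X}, V ≤ U → (F U →+* F V))
    (res_id : ∀ (U : Opens X) (x : F U), res le_rfl x = x)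
    (res_comp : ∀ {U V W : Opens X} (hVU : V ≤ U) (hWV : W ≤ V) (x : F U),
      res hWV (res hVU x) = res (hWV.trans hVU) x)
    (F' : Opens X → Type v) [∀ U, CommRing (F' U)] [Subsingleton (F' ⊥)]
    (res' : ∀ {U V : Opens X}, V ≤ U → (F' U →+* F' V))
    (res'_id : ∀ (U : Opens X) (x : F' U), res' le_rfl x = x)
    (res'_comp : ∀ {U V W : Opens X} (hVU : V ≤ U) (hWV : W ≤ V) (x : F' U),
      res' hWV (res' hVU x) = res' (hWV.trans hVU) x) :
    -- `T(F) ≃ T(F')` as pre-meadows with `𝐚`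
    (∃ φ : (Σ U : Opens X, F U) ≃ (Σ U : Opens X, F' U),
      (∀ s t : Σ U : Opens X, F U, φ (psAdd res s t) = psAdd res' (φ s) (φ t)) ∧
      (∀ s t : Σ U : Opens X, F U, φ (psMul res s t) = psMul res' (φ s) (φ t)) ∧
      φ (psOne F) = psOne F') ↔
    -- iff there is a homeomorphism `f` with `F ≅ f_* F'`
    (∃ f : X ≃ₜ X, ∃ e : ∀ U : Opens X, F U ≃ F' (preim f U),
      (∀ (U : Opens X) (x y : F U), e U (x + y) = e U x + e U y) ∧
      (∀ (U : Opens X) (x y : F U), e U (x * y) = e U x * e U y) ∧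
      (∀ U : Opens X, e U (1 : F U) = 1) ∧
      (∀ (U V : Opens X) (h : V ≤ U) (x : F U),
        e V (res h x) = res' (preim_mono f h) (e U x))) := by
  constructor
  · -- forward direction
    rintro ⟨φ, hadd, hmul, hone⟩
    have hadd' : ∀ s t, φ.symm (psAdd res' s t) = psAdd res (φ.symm s) (φ.symm t) := by
      intro s t
      apply φ.injective
      rw [Equiv.apply_symm_apply, hadd, Equiv.apply_symm_apply, Equiv.apply_symm_apply]
    have hmul' : ∀ s t, φ.symm (psMul res' s t) = psMul res (φ.symm s) (φ.symm t) := by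
      intro s t
      apply φ.injective
      rw [Equiv.apply_symm_apply, hmul, Equiv.apply_symm_apply, Equiv.apply_symm_apply]
    have hzero : φ (psZero F) = psZero F' := by
      have h1 := hadd (φ.symm (psZero F')) (psZero F)
      rw [S13.psAdd_zero_right res res_id, Equiv.apply_symm_apply,
        S13.psAdd_zero_left res' res'_id] at h1
      exact h1.symm
    have hzero' : φ.symm (psZero F') = psZero F := by
      rw [← hzero, Equiv.symm_apply_apply]
    set g : Opens X → Opens X := fun U => (φ ⟨U, (0 : F U)⟩).1 with hgdef
    set g' : Opens X → Opens X := fun U => (φ.symm ⟨U, (0 : F' U)⟩).1 with hg'def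
    have hsec : ∀ U, φ ⟨U, (0 : F U)⟩ = ⟨g U, 0⟩ := fun U =>
      S13.phi_zero_section res res' φ hmul hzero U
    have hsec' : ∀ U, φ.symm ⟨U, (0 : F' U)⟩ = ⟨g' U, 0⟩ := fun U =>
      S13.phi_zero_section res' res φ.symm hmul' hzero' U
    have hgg' : ∀ U, g' (g U) = U := by
      intro U
      show (φ.symm ⟨g U, 0⟩).1 = U
      rw [← hsec U, Equiv.symm_apply_apply]
    have hg'g : ∀ U, g (g' U) = U := by
      intro U
      show (φ ⟨g' U, 0⟩).1 = U
      rw [← hsec' U, Equiv.apply_symm_apply]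
    have hginf : ∀ U V, g (U ⊓ V) = g U ⊓ g V := by
      intro U V
      have h := hmul ⟨U, (0 : F U)⟩ ⟨V, (0 : F V)⟩
      rw [S13.psMul_zero_zero res, hsec U, hsec V, S13.psMul_zero_zero res',
        hsec (U ⊓ V)] at h
      exact congrArg Sigma.fst h
    have hg'inf : ∀ U V, g' (U ⊓ V) = g' U ⊓ g' V := by
      intro U V
      have h := hmul' ⟨U, (0 : F' U)⟩ ⟨V, (0 : F' V)⟩
      rw [S13.psMul_zero_zero res', hsec' U, hsec' V, S13.psMul_zero_zero res,
        hsec' (U ⊓ V)] at h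
      exact congrArg Sigma.fst h
    have hgmono : ∀ {U V : Opens X}, U ≤ V → g U ≤ g V := by
      intro U V h
      have h1 : U ⊓ V = U := inf_eq_left.mpr h
      calc g U = g (U ⊓ V) := by rw [h1]
        _ = g U ⊓ g V := hginf U V
        _ ≤ g V := inf_le_right
    have hg'mono : ∀ {U V : Opens X}, U ≤ V → g' U ≤ g' V := by
      intro U V h
      have h1 : U ⊓ V = U := inf_eq_left.mpr h
      calc g' U = g' (U ⊓ V) := by rw [h1]
        _ = g' U ⊓ g' V := hg'inf U V
        _ ≤ g' V := inf_le_right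
    let gIso : Opens X ≃o Opens X :=
      { toFun := g
        invFun := g'
        left_inv := hgg'
        right_inv := hg'g
        map_rel_iff' := by
          intro U V
          constructor
          · intro h
            have h3 : g' (g U) ≤ g' (g V) := hg'mono h
            rwa [hgg' U, hgg' V] at h3
          · exact hgmono }
    obtain ⟨f, hf⟩ := S13.homeo_of_orderIso hTD gIso
    have hf' : ∀ U : Opens X, preim f U = g U := hf
    have hfst : ∀ (U : Opens X) (x : F U), (φ ⟨U, x⟩).1 = g U := fun U x =>
      S13.phi_fst res res' φ hmul hzero U x
    let m : ∀ U : Opens X, F U → F' (g U) := fun U x =>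
      cast (congrArg F' (hfst U x)) (φ ⟨U, x⟩).2
    have hm : ∀ (U : Opens X) (x : F U), φ ⟨U, x⟩ = ⟨g U, m U x⟩ := fun U x =>
      S13.sigma_cast _ (hfst U x)
    have hminj : ∀ (U : Opens X) (x y : F U), m U x = m U y → x = y := by
      intro U x y h
      have h2 : φ ⟨U, x⟩ = φ ⟨U, y⟩ := by rw [hm U x, hm U y, h]
      exact S13.snd_inj (φ.injective h2)
    have hmsurj : ∀ (U : Opens X) (y : F' (g U)), ∃ x, m U x = y := by
      intro U y
      have h1 : (φ.symm ⟨g U, y⟩).1 = U := by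
        rw [S13.phi_fst res' res φ.symm hmul' hzero' (g U) y]
        exact hgg' U
      refine ⟨cast (congrArg F h1) (φ.symm ⟨g U, y⟩).2, ?_⟩
      have h3 : φ ⟨U, cast (congrArg F h1) (φ.symm ⟨g U, y⟩).2⟩ = ⟨g U, y⟩ := by
        rw [← S13.sigma_cast _ h1, Equiv.apply_symm_apply]
      rw [hm U _] at h3
      exact S13.snd_inj h3
    have hmadd : ∀ (U : Opens X) (x y : F U), m U (x + y) = m U x + m U y := by
      intro U x y
      have h := hadd ⟨U, x⟩ ⟨U, y⟩
      rw [S13.psAdd_diag res res_id, hm U x, hm U y, S13.psAdd_diag res' res'_id,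
        hm U (x + y)] at h
      exact S13.snd_inj h
    have hmmul : ∀ (U : Opens X) (x y : F U), m U (x * y) = m U x * m U y := by
      intro U x y
      have h := hmul ⟨U, x⟩ ⟨U, y⟩
      rw [S13.psMul_diag res res_id, hm U x, hm U y, S13.psMul_diag res' res'_id,
        hm U (x * y)] at h
      exact S13.snd_inj h
    have hmone : ∀ U : Opens X, m U (1 : F U) = 1 := by
      intro U
      obtain ⟨w, hw⟩ := hmsurj U 1
      have h := hmul ⟨U, w⟩ ⟨U, (1 : F U)⟩
      rw [S13.psMul_diag res res_id, mul_one, hm U w, hm U 1,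
        S13.psMul_diag res' res'_id] at h
      have h2 : m U w = m U w * m U 1 := S13.snd_inj h
      rw [hw, one_mul] at h2
      exact h2.symm
    have hmres : ∀ (U V : Opens X) (h : V ≤ U) (x : F U),
        m V (res h x) = res' (hgmono h) (m U x) := by
      intro U V h x
      have h1 := hmul ⟨U, x⟩ ⟨V, (1 : F V)⟩
      rw [S13.psMul_one_right res h, hm U x, hm V 1, hmone V,
        S13.psMul_one_right res' (hgmono h), hm V (res h x)] at h1
      exact S13.snd_inj h1
    refine ⟨f, fun U => (Equiv.ofBijective (m U)
      ⟨fun x y hxy => hminj U x y hxy, fun y => hmsurj U y⟩).trans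
      (Equiv.cast (congrArg F' (hf' U).symm)), ?_, ?_, ?_, ?_⟩
    · intro U x y
      show cast (congrArg F' (hf' U).symm) (m U (x + y))
        = cast (congrArg F' (hf' U).symm) (m U x) + cast (congrArg F' (hf' U).symm) (m U y)
      rw [hmadd U x y]
      exact S13.cast_add (F := F') (hf' U).symm (m U x) (m U y)
    · intro U x y
      show cast (congrArg F' (hf' U).symm) (m U (x * y))
        = cast (congrArg F' (hf' U).symm) (m U x) * cast (congrArg F' (hf' U).symm) (m U y)
      rw [hmmul U x y]
      exact S13.cast_mul (F := F') (hf' U).symm (m U x) (m U y)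
    · intro U
      show cast (congrArg F' (hf' U).symm) (m U 1) = 1
      rw [hmone U]
      exact S13.cast_one (F := F') (hf' U).symm
    · intro U V h x
      show cast (congrArg F' (hf' V).symm) (m V (res h x))
        = res' (preim_mono f h) (cast (congrArg F' (hf' U).symm) (m U x))
      rw [hmres U V h x]
      exact S13.cast_res (F := F') res' (hf' U).symm (hf' V).symm (hgmono h)
        (preim_mono f h) (m U x)
  · -- backward direction
    rintro ⟨f, e, he_add, he_mul, he_one, he_res⟩
    have hri : ∀ U : Opens X, preim f (preim f.symm U) = U := by
      intro U
      apply Opens.ext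
      ext y
      simp [preim]
    have hli : ∀ U : Opens X, preim f.symm (preim f U) = U := by
      intro U
      apply Opens.ext
      ext y
      simp [preim]
    let φ : (Σ U : Opens X, F U) ≃ (Σ U : Opens X, F' U) :=
      { toFun := fun s => ⟨preim f s.1, e s.1 s.2⟩
        invFun := fun t => ⟨preim f.symm t.1,
          (e (preim f.symm t.1)).symm (cast (congrArg F' (hri t.1).symm) t.2)⟩
        left_inv := by
          rintro ⟨U, x⟩
          have key : ∀ (A : Opens X) (hA : A = U)
              (hc : F' (preim f U) = F' (preim f A)) (z : F' (preim f U)),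
              ((e A).symm (cast hc z) : F A) = cast (congrArg F hA.symm) ((e U).symm z) := by
            intro A hA hc z
            subst hA
            rfl
          show (⟨preim f.symm (preim f U),
            (e (preim f.symm (preim f U))).symm
              (cast (congrArg F' (hri (preim f U)).symm) (e U x))⟩ : Σ U : Opens X, F U)
            = ⟨U, x⟩
          rw [key (preim f.symm (preim f U)) (hli U) _ (e U x), Equiv.symm_apply_apply]
          exact S13.sigma_cast_symm (hli U) x
        right_inv := by
          rintro ⟨V, y⟩
          show (⟨preim f (preim f.symm V),
            e (preim f.symm V)
              ((e (preim f.symm V)).symm (cast (congrArg F' (hri V).symm) y))⟩ :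
              Σ U : Opens X, F' U) = ⟨V, y⟩
          rw [Equiv.apply_symm_apply]
          exact S13.sigma_cast_symm (hri V) y }
    have hφ : ∀ (U : Opens X) (x : F U), φ ⟨U, x⟩ = ⟨preim f U, e U x⟩ := fun U x => rfl
    refine ⟨φ, ?_, ?_, ?_⟩
    · rintro ⟨U, x⟩ ⟨V, y⟩
      have hI : preim f (U ⊓ V) = preim f U ⊓ preim f V := rfl
      show (⟨preim f (U ⊓ V), e (U ⊓ V)
          (res (inf_le_left : U ⊓ V ≤ U) x + res (inf_le_right : U ⊓ V ≤ V) y)⟩ :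
          Σ U : Opens X, F' U)
        = ⟨preim f U ⊓ preim f V,
            res' (inf_le_left : preim f U ⊓ preim f V ≤ preim f U) (e U x)
          + res' (inf_le_right : preim f U ⊓ preim f V ≤ preim f V) (e V y)⟩
      rw [he_add, he_res U (U ⊓ V) inf_le_left x, he_res V (U ⊓ V) inf_le_right y]
      exact S13.sigma_add_congr res' hI (preim_mono f inf_le_left) inf_le_left
        (preim_mono f inf_le_right) inf_le_right (e U x) (e V y)
    · rintro ⟨U, x⟩ ⟨V, y⟩
      have hI : preim f (U ⊓ V) = preim f U ⊓ preim f V := rfl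
      show (⟨preim f (U ⊓ V), e (U ⊓ V)
          (res (inf_le_left : U ⊓ V ≤ U) x * res (inf_le_right : U ⊓ V ≤ V) y)⟩ :
          Σ U : Opens X, F' U)
        = ⟨preim f U ⊓ preim f V,
            res' (inf_le_left : preim f U ⊓ preim f V ≤ preim f U) (e U x)
          * res' (inf_le_right : preim f U ⊓ preim f V ≤ preim f V) (e V y)⟩
      rw [he_mul, he_res U (U ⊓ V) inf_le_left x, he_res V (U ⊓ V) inf_le_right y]
      exact S13.sigma_mul_congr res' hI (preim_mono f inf_le_left) inf_le_left
        (preim_mono f inf_le_right) inf_le_right (e U x) (e V y)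
    · have hTop : preim f ⊤ = ⊤ := by
        apply Opens.ext
        ext y
        simp [preim]
      show (⟨preim f ⊤, e ⊤ (1 : F ⊤)⟩ : Σ U : Opens X, F' U) = ⟨⊤, 1⟩
      rw [he_one]
      exact S13.sigma_one_congr hTop
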